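/- ((T+1)-privacy property, equation (10) of the paper.) In the key-construction setup, suppose α ∈ F^{U×K} is a (T+1)-private MDS matrix. Then for every subset C ⊆ {1,…,K} with |C| ≤ T+1, the random tuple ([Q_i]_k)_{i∈{1,…,K}, k∈C} of all shares indexed by C is independent of the random tuple (N₁,…,N_K). -/

import Mathlib

open MeasureTheory Finset
open scoped ENNReal

/-- Two (discrete) random tuples `f` and `g` are statistically independent:
the joint law of `(f, g)` is the product of the marginal laws, expressed pointwise. -/
def IndepRV {Ω A B : Type*} [MeasurableSpace Ω] (P : Measure Ω)
    (f : Ω → A) (g : Ω → B) : Prop :=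
  ∀ (a : A) (b : B), P (f ⁻¹' {a} ∩ g ⁻¹' {b}) = P (f ⁻¹' {a}) * P (g ⁻¹' {b})

/-- A random variable valued in a finite type is uniformly distributed. -/
def UniformRV {Ω A : Type*} [Fintype A] [MeasurableSpace Ω] (P : Measure Ω)
    (f : Ω → A) : Prop :=
  ∀ a : A, P (f ⁻¹' {a}) = (Fintype.card A : ℝ≥0∞)⁻¹

/-- `α ∈ F^{U×K}` is an MDS matrix: every `U×U` submatrix formed by `U` distinct
columns is invertible. -/
def IsMDS {F : Type*} [Field F] {U K : ℕ} (α : Matrix (Fin U) (Fin K) F) : Prop :=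
  ∀ c : Fin U → Fin K, Function.Injective c →
    (Matrix.of fun i j : Fin U => α i (c j)).det ≠ 0

/-- `α ∈ F^{U×K}` is a `(T+1)`-private MDS matrix: it is MDS, and in addition every
`(T+1)×(T+1)` submatrix formed by `T+1` distinct columns of its last `T+1` rows is
invertible. -/
def IsPrivateMDS {F : Type*} [Field F] {U K : ℕ} (T : ℕ) (hTU : T + 1 ≤ U)
    (α : Matrix (Fin U) (Fin K) F) : Prop :=
  IsMDS α ∧
    ∀ c : Fin (T + 1) → Fin K, Function.Injective c →
      (Matrix.of fun i j : Fin (T + 1) =>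
        α ⟨U - (T + 1) + i.1, by have := i.isLt; omega⟩ (c j)).det ≠ 0

/-- The scalar share `[Q_i]_k`: the inner product of the concatenated row vector
`(N_i, S_i) ∈ F^U` with the `k`-th column of `α`. -/
def share {F : Type*} [Field F] {U K T : ℕ} (h : U - T - 1 + (T + 1) = U)
    (α : Matrix (Fin U) (Fin K) F)
    (n : Fin (U - T - 1) → F) (s : Fin (T + 1) → F) (k : Fin K) : F :=
  ∑ j : Fin U, Fin.append n s (Fin.cast h.symm j) * α j k

/-! ### Auxiliary lemmas -/

/-- If a probability measure gives every atom of a finite-valued map the same mass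
`(card X)⁻¹`, then the mass of any preimage is proportional to the cardinality. -/
lemma atomic_measure {Ω X : Type*} [MeasurableSpace Ω] [Fintype X]
    (P : Measure Ω) [IsProbabilityMeasure P] (W : Ω → X)
    (hX : Fintype.card X ≠ 0)
    (h : ∀ x, P (W ⁻¹' {x}) = (Fintype.card X : ℝ≥0∞)⁻¹) (E : Set X) :
    P (W ⁻¹' E) = (Nat.card E : ℝ≥0∞) * (Fintype.card X : ℝ≥0∞)⁻¹ := by
  classical
  have key : ∀ (E : Set X), P (W ⁻¹' E) ≤ (Nat.card E : ℝ≥0∞) * (Fintype.card X : ℝ≥0∞)⁻¹ := by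
    intro E
    have h1 : W ⁻¹' E ⊆ ⋃ x ∈ E.toFinset, W ⁻¹' {x} := by
      intro ω hω; simp only [Set.mem_iUnion]; exact ⟨W ω, by simpa using hω, rfl⟩
    calc P (W ⁻¹' E) ≤ ∑ x ∈ E.toFinset, P (W ⁻¹' {x}) :=
          le_trans (measure_mono h1) (measure_biUnion_finset_le _ _)
      _ = (Nat.card E : ℝ≥0∞) * (Fintype.card X : ℝ≥0∞)⁻¹ := by
          simp [h, Finset.sum_const, Nat.card_eq_card_toFinset, mul_comm]
  have hcard : (Nat.card E : ℝ≥0∞) * (Fintype.card X : ℝ≥0∞)⁻¹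
      + (Nat.card ↥(Eᶜ) : ℝ≥0∞) * (Fintype.card X : ℝ≥0∞)⁻¹ = 1 := by
    rw [← add_mul, ← Nat.cast_add]
    have : Nat.card E + Nat.card ↥(Eᶜ) = Fintype.card X := by
      rw [Nat.card_eq_card_toFinset, Nat.card_eq_card_toFinset, Set.toFinset_compl]
      exact Finset.card_add_card_compl _
    rw [this, ENNReal.mul_inv_cancel (by exact_mod_cast hX) (by simp)]
  have hub := key E
  have hubc := key Eᶜ
  have hone : (1 : ℝ≥0∞) ≤ P (W ⁻¹' E) + P (W ⁻¹' Eᶜ) := by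
    have : (Set.univ : Set Ω) ⊆ W ⁻¹' E ∪ W ⁻¹' Eᶜ := by
      intro ω _; by_cases hc : W ω ∈ E
      · exact Or.inl hc
      · exact Or.inr hc
    calc (1:ℝ≥0∞) = P Set.univ := (measure_univ).symm
      _ ≤ P (W ⁻¹' E ∪ W ⁻¹' Eᶜ) := measure_mono this
      _ ≤ _ := measure_union_le _ _
  refine le_antisymm hub ?_
  have hne : (Nat.card ↥(Eᶜ) : ℝ≥0∞) * (Fintype.card X : ℝ≥0∞)⁻¹ ≠ ⊤ :=
    ENNReal.mul_ne_top (by simp) (ENNReal.inv_ne_top.mpr (by exact_mod_cast hX))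
  rw [← ENNReal.add_le_add_iff_right hne, hcard]
  exact le_trans hone (add_le_add_right hubc _)

/-- Fibers of a surjective additive map are all equivalent to the kernel fiber. -/
noncomputable def fiberEquiv {V W : Type*} [AddCommGroup V] [AddCommGroup W]
    (L : V → W) (hadd : ∀ x y, L (x + y) = L x + L y)
    (hsurj : Function.Surjective L) (y : W) :
    {v // L v = y} ≃ {v // L v = 0} := by
  classical
  have hex := hsurj y
  set v0 := hex.choose with hv0def
  have hv0 : L v0 = y := hex.choose_spec
  have hsub : ∀ x y, L (x - y) = L x - L y := by
    intro x y
    have h2 : L (x - y) + L y = L x := by rw [← hadd]; simp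
    exact eq_sub_of_add_eq h2
  exact
    { toFun := fun v => ⟨v.1 - v0, by rw [hsub, v.2, hv0, sub_self]⟩
      invFun := fun v => ⟨v.1 + v0, by
        have : L (v.1 + v0) = L v.1 + L v0 := hadd _ _
        rw [this, v.2, hv0, zero_add]⟩
      left_inv := fun v => Subtype.ext (by simp)
      right_inv := fun v => Subtype.ext (by simp) }

section KeyAux

variable {F : Type} [Field F] {K U T : ℕ}

/-- The bottom `T+1` rows of `α`. -/
def botRow (hTU : T + 1 ≤ U) (α : Matrix (Fin U) (Fin K) F)
    (j : Fin (T + 1)) (k : Fin K) : F :=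
  α ⟨U - (T + 1) + j.1, by have := j.isLt; omega⟩ k

/-- The linear map `F^{T+1} → F^C` coming from the bottom rows of `α`. -/
def Lfun (hTU : T + 1 ≤ U) (α : Matrix (Fin U) (Fin K) F) (C : Finset (Fin K))
    (s : Fin (T + 1) → F) (k : {k : Fin K // k ∈ C}) : F :=
  ∑ j, s j * botRow hTU α j k.1

lemma Lfun_add (hTU : T + 1 ≤ U) (α : Matrix (Fin U) (Fin K) F) (C : Finset (Fin K))
    (s s' : Fin (T + 1) → F) :
    Lfun hTU α C (s + s') = Lfun hTU α C s + Lfun hTU α C s' := by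
  funext k; simp [Lfun, add_mul, Finset.sum_add_distrib]

lemma share_decomp (h : U - T - 1 + (T + 1) = U) (hTU : T + 1 ≤ U)
    (α : Matrix (Fin U) (Fin K) F)
    (n : Fin (U - T - 1) → F) (s : Fin (T + 1) → F) (k : Fin K) :
    share h α n s k =
      (∑ j : Fin (U - T - 1), n j * α (Fin.cast h (Fin.castAdd (T + 1) j)) k) +
        ∑ j : Fin (T + 1), s j * botRow hTU α j k := by
  unfold share
  rw [← Equiv.sum_comp (finCongr h) (fun j => Fin.append n s (Fin.cast h.symm j) * α j k)]
  rw [Fin.sum_univ_add]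
  congr 1
  · apply Finset.sum_congr rfl; intro j _
    simp [finCongr]
  · apply Finset.sum_congr rfl; intro j _
    have h1 : Fin.cast h.symm (finCongr h (Fin.natAdd (U - T - 1) j)) = Fin.natAdd _ j := by
      simp [finCongr]
    have h2 : (finCongr h (Fin.natAdd (U - T - 1) j) : Fin U) =
        (⟨U - (T + 1) + j.1, by have := j.isLt; omega⟩ : Fin U) := by
      apply Fin.ext; simp [finCongr]; omega
    rw [h1, h2, Fin.append_right]
    rfl

lemma Lfun_surj (hTU : T + 1 ≤ U) (hUK : U ≤ K) (α : Matrix (Fin U) (Fin K) F)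
    (C : Finset (Fin K)) (hC : C.card ≤ T + 1)
    (hpriv : ∀ c : Fin (T + 1) → Fin K, Function.Injective c →
      (Matrix.of fun i j : Fin (T + 1) =>
        α ⟨U - (T + 1) + i.1, by have := i.isLt; omega⟩ (c j)).det ≠ 0) :
    Function.Surjective (Lfun hTU α C) := by
  classical
  intro t
  have hTK : T + 1 ≤ K := le_trans hTU hUK
  obtain ⟨D, hCD, -, hD⟩ := Finset.exists_subsuperset_card_eq C.subset_univ hC
    (by simpa using hTK)
  set e := D.orderIsoOfFin hD with he
  set c : Fin (T + 1) → Fin K := fun j => (e j : Fin K) with hc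
  have hcinj : Function.Injective c := fun x y hxy => e.injective (Subtype.ext hxy)
  set M : Matrix (Fin (T + 1)) (Fin (T + 1)) F :=
    Matrix.of (fun i j => botRow hTU α i (c j)) with hM
  have hdet : M.det ≠ 0 := hpriv c hcinj
  have hMunit : IsUnit M.det := isUnit_iff_ne_zero.mpr hdet
  set y : Fin (T + 1) → F := fun j => if hj : (c j) ∈ C then t ⟨c j, hj⟩ else 0 with hy
  refine ⟨Matrix.vecMul y M⁻¹, ?_⟩
  have hs : Matrix.vecMul (Matrix.vecMul y M⁻¹) M = y := by
    rw [Matrix.vecMul_vecMul, Matrix.nonsing_inv_mul _ hMunit, Matrix.vecMul_one]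
  funext k
  obtain ⟨j, hj⟩ : ∃ j, c j = k.1 := by
    refine ⟨e.symm ⟨k.1, hCD k.2⟩, ?_⟩
    simp [hc]
  have h1 : Lfun hTU α C (Matrix.vecMul y M⁻¹) k = Matrix.vecMul (Matrix.vecMul y M⁻¹) M j := by
    simp only [Lfun, Matrix.vecMul, dotProduct, hM, Matrix.of_apply, hj]
  rw [h1, hs, hy]
  have hjC : c j ∈ C := hj ▸ k.2
  simp only [hjC, dif_pos]
  congr 1
  exact Subtype.ext hj

end KeyAux

theorem key_construction_privacy
    (F : Type) [Field F] [Fintype F] (q K U T : ℕ)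
    (hq : Fintype.card F = q) (hTU : T + 1 ≤ U) (hUK : U ≤ K)
    (Ω : Type) [MeasurableSpace Ω] (P : Measure Ω) [IsProbabilityMeasure P]
    (N : Fin K → Ω → (Fin (U - T - 1) → F))
    (S : Fin K → Ω → (Fin (T + 1) → F))
    (hindep : ∀ (a : Fin K → (Fin (U - T - 1) → F)) (b : Fin K → (Fin (T + 1) → F)),
      P ((⋂ i, N i ⁻¹' {a i}) ∩ ⋂ i, S i ⁻¹' {b i}) =
        (∏ i, P (N i ⁻¹' {a i})) * ∏ i, P (S i ⁻¹' {b i}))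
    (hunifN : ∀ i, UniformRV P (N i))
    (hunifS : ∀ i, UniformRV P (S i))
    (α : Matrix (Fin U) (Fin K) F)
    (hα : IsPrivateMDS T hTU α)
    (C : Finset (Fin K)) (hC : C.card ≤ T + 1) :
    IndepRV P
      (fun ω => fun p : Fin K × {k : Fin K // k ∈ C} =>
        share (by omega) α (N p.1 ω) (S p.1 ω) p.2.1)
      (fun ω => fun i : Fin K => N i ω) := by
  classical
  intro a b
  have h : U - T - 1 + (T + 1) = U := by omega
  set Wf : Ω → (Fin K → (Fin (U - T - 1) → F)) × (Fin K → (Fin (T + 1) → F)) :=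
    fun ω => (fun i => N i ω, fun i => S i ω) with hWf
  have hNScard : Fintype.card ((Fin K → (Fin (U - T - 1) → F)) × (Fin K → (Fin (T + 1) → F))) ≠ 0 :=
    Fintype.card_ne_zero
  have hatom : ∀ x, P (Wf ⁻¹' {x}) =
      (Fintype.card ((Fin K → (Fin (U - T - 1) → F)) × (Fin K → (Fin (T + 1) → F))) : ℝ≥0∞)⁻¹ := by
    intro x
    have hset : Wf ⁻¹' {x} = (⋂ i, N i ⁻¹' {x.1 i}) ∩ ⋂ i, S i ⁻¹' {x.2 i} := by
      ext ω
      simp [hWf, Prod.ext_iff, funext_iff, Set.mem_iInter, forall_and]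
    rw [hset, hindep]
    have h1 : (∏ i, P (N i ⁻¹' {x.1 i})) =
        ((Fintype.card (Fin (U - T - 1) → F) : ℝ≥0∞))⁻¹ ^ K := by
      rw [Finset.prod_congr rfl (fun i _ => hunifN i (x.1 i))]; simp
    have h2 : (∏ i, P (S i ⁻¹' {x.2 i})) =
        ((Fintype.card (Fin (T + 1) → F) : ℝ≥0∞))⁻¹ ^ K := by
      rw [Finset.prod_congr rfl (fun i _ => hunifS i (x.2 i))]; simp
    rw [h1, h2, ← ENNReal.inv_pow, ← ENNReal.inv_pow,
      ← ENNReal.mul_inv (Or.inr (by simp)) (Or.inl (by simp))]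
    congr 1
    rw [Fintype.card_prod]
    push_cast
    congr 1 <;> · rw [Fintype.card_fun]; push_cast; simp
  set E1 : Set ((Fin K → (Fin (U - T - 1) → F)) × (Fin K → (Fin (T + 1) → F))) :=
    {x | ∀ p : Fin K × {k : Fin K // k ∈ C}, share h α (x.1 p.1) (x.2 p.1) p.2.1 = a p} with hE1
  set E2 : Set ((Fin K → (Fin (U - T - 1) → F)) × (Fin K → (Fin (T + 1) → F))) :=
    {x | x.1 = b} with hE2
  have hf : (fun ω => fun p : Fin K × {k : Fin K // k ∈ C} =>
      share (by omega : U - T - 1 + (T + 1) = U) α (N p.1 ω) (S p.1 ω) p.2.1) ⁻¹' {a}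
      = Wf ⁻¹' E1 := by
    ext ω
    simp [hE1, hWf, funext_iff]
  have hg : (fun ω => fun i : Fin K => N i ω) ⁻¹' {b} = Wf ⁻¹' E2 := by
    ext ω
    simp [hE2, hWf]
  rw [hf, hg, ← Set.preimage_inter]
  rw [atomic_measure P Wf hNScard hatom (E1 ∩ E2),
    atomic_measure P Wf hNScard hatom E1, atomic_measure P Wf hNScard hatom E2]
  -- counting
  have hLsurj : Function.Surjective (Lfun hTU α C) := Lfun_surj hTU hUK α C hC hα.2
  have fibEquiv : ∀ (n0 : Fin (U - T - 1) → F) (t : {k : Fin K // k ∈ C} → F),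
      {s : Fin (T + 1) → F // ∀ k : {k : Fin K // k ∈ C}, share h α n0 s k.1 = t k} ≃
      {s : Fin (T + 1) → F // Lfun hTU α C s = 0} := by
    intro n0 t
    refine (Equiv.subtypeEquivRight (fun s => ?_)).trans
      (fiberEquiv (Lfun hTU α C) (Lfun_add hTU α C) hLsurj
        (fun k => t k - ∑ j, n0 j * α (Fin.cast h (Fin.castAdd (T + 1) j)) k.1))
    rw [funext_iff]
    refine forall_congr' fun k => ?_
    rw [share_decomp h hTU α n0 s k.1]
    constructor
    · intro hh
      have : Lfun hTU α C s k = ∑ j : Fin (T + 1), s j * botRow hTU α j k.1 := rfl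
      rw [this, eq_sub_iff_add_eq, add_comm]
      exact hh
    · intro hh
      have : Lfun hTU α C s k = ∑ j : Fin (T + 1), s j * botRow hTU α j k.1 := rfl
      rw [this, eq_sub_iff_add_eq, add_comm] at hh
      exact hh
  set G := ∀ _ : Fin K, {s : Fin (T + 1) → F // Lfun hTU α C s = 0} with hG
  have stepn : ∀ n0 : Fin K → (Fin (U - T - 1) → F),
      {s : Fin K → (Fin (T + 1) → F) //
        ∀ p : Fin K × {k : Fin K // k ∈ C}, share h α (n0 p.1) (s p.1) p.2.1 = a p} ≃ G := by
    intro n0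
    refine Equiv.trans (Equiv.subtypeEquivRight (fun s => ?_))
      (Equiv.trans (Equiv.subtypePiEquivPi
          (p := fun i si => ∀ k : {k : Fin K // k ∈ C}, share h α (n0 i) si k.1 = a (i, k)))
        (Equiv.piCongrRight fun i => fibEquiv (n0 i) (fun k => a (i, k))))
    exact Prod.forall
  have eq12 : ↥(E1 ∩ E2) ≃ G := by
    refine Equiv.trans ?_ (stepn b)
    exact
      { toFun := fun x => ⟨x.1.2, fun p => by
          have h1 := x.2.1 p
          rwa [x.2.2] at h1⟩
        invFun := fun s => ⟨(b, s.1), ⟨fun p => s.2 p, rfl⟩⟩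
        left_inv := fun x => Subtype.ext (Prod.ext x.2.2.symm rfl)
        right_inv := fun s => rfl }
  have eq1 : ↥E1 ≃ (Fin K → (Fin (U - T - 1) → F)) × G :=
    Equiv.trans (Equiv.subtypeProdEquivSigmaSubtype
      (fun (n0 : Fin K → (Fin (U - T - 1) → F)) (s : Fin K → (Fin (T + 1) → F)) =>
        ∀ p : Fin K × {k : Fin K // k ∈ C}, share h α (n0 p.1) (s p.1) p.2.1 = a p))
      (Equiv.trans (Equiv.sigmaCongrRight fun n0 => stepn n0) (Equiv.sigmaEquivProd _ _))
  have eq2 : ↥E2 ≃ (Fin K → (Fin (T + 1) → F)) :=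
    { toFun := fun x => x.1.2
      invFun := fun s => ⟨(b, s), rfl⟩
      left_inv := fun x => Subtype.ext (Prod.ext x.2.symm rfl)
      right_inv := fun s => rfl }
  have hkey : Nat.card ↥(E1 ∩ E2) *
      Fintype.card ((Fin K → (Fin (U - T - 1) → F)) × (Fin K → (Fin (T + 1) → F)))
      = Nat.card ↥E1 * Nat.card ↥E2 := by
    rw [Nat.card_congr eq12, Nat.card_congr eq1, Nat.card_congr eq2, Nat.card_prod,
      ← Nat.card_eq_fintype_card, Nat.card_prod]
    ring
  set n : ℝ≥0∞ :=
    (Fintype.card ((Fin K → (Fin (U - T - 1) → F)) × (Fin K → (Fin (T + 1) → F))) : ℝ≥0∞) with hn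
  have hn0 : n ≠ 0 := by rw [hn]; exact_mod_cast hNScard
  have hnt : n ≠ ⊤ := by rw [hn]; exact ENNReal.natCast_ne_top _
  have hcast : (Nat.card ↥(E1 ∩ E2) : ℝ≥0∞) * n =
      (Nat.card ↥E1 : ℝ≥0∞) * (Nat.card ↥E2 : ℝ≥0∞) := by
    rw [hn]
    exact_mod_cast congrArg (Nat.cast : ℕ → ℝ≥0∞) hkey
  calc (Nat.card ↥(E1 ∩ E2) : ℝ≥0∞) * n⁻¹
      = ((Nat.card ↥(E1 ∩ E2) : ℝ≥0∞) * n⁻¹) * (n * n⁻¹) := by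
        rw [ENNReal.mul_inv_cancel hn0 hnt, mul_one]
    _ = ((Nat.card ↥(E1 ∩ E2) : ℝ≥0∞) * n) * (n⁻¹ * n⁻¹) := by ring
    _ = ((Nat.card ↥E1 : ℝ≥0∞) * (Nat.card ↥E2 : ℝ≥0∞)) * (n⁻¹ * n⁻¹) := by rw [hcast]
    _ = ((Nat.card ↥E1 : ℝ≥0∞) * n⁻¹) * ((Nat.card ↥E2 : ℝ≥0∞) * n⁻¹) := by ring
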